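/- Let θ ∈ ℝ, η > 0, and g ≥ 0 be real numbers, and set θ' := θ + η·g. If σ(θ') ≤ 1/2, then σ(θ') − σ(θ) ≥ η·g·σ(θ). -/
import Mathlib


/-- Two-action softmax probability with antisymmetric logits `(θ, -θ)`. -/
noncomputable def twoActionSoftmax (θ : ℝ) : ℝ :=
  Real.exp θ / (Real.exp θ + Real.exp (-θ))

/-- **One-step softmax change, nonnegative gradient:** for `η > 0`, `g ≥ 0` and
`θ' = θ + η g`, if `σ(θ') ≤ 1/2` then `σ(θ') − σ(θ) ≥ η g σ(θ)`. -/
theorem twoActionSoftmax_step_lower_bound_of_nonneg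
    (θ η g : ℝ) (hη : 0 < η) (hg : 0 ≤ g)
    (hhalf : twoActionSoftmax (θ + η * g) ≤ 1 / 2) :
    η * g * twoActionSoftmax θ ≤
      twoActionSoftmax (θ + η * g) - twoActionSoftmax θ := by
  set t := η * g with htdef
  have ht : 0 ≤ t := mul_nonneg hη.le hg
  have hA : 0 < Real.exp θ := Real.exp_pos _
  have hA' : 0 < Real.exp (-θ) := Real.exp_pos _
  have hB : 0 < Real.exp (θ + t) := Real.exp_pos _
  have hB' : 0 < Real.exp (-(θ + t)) := Real.exp_pos _
  -- from hhalf, θ + t ≤ 0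
  have hb : θ + t ≤ 0 := by
    unfold twoActionSoftmax at hhalf
    rw [div_le_div_iff₀ (by linarith) (by norm_num)] at hhalf
    have : Real.exp (θ + t) ≤ Real.exp (-(θ + t)) := by linarith
    have := Real.exp_le_exp.mp this
    linarith
  have hsq : Real.exp (θ + t) ≤ 1 := Real.exp_le_one_iff.mpr hb
  have hAA : Real.exp θ * Real.exp (-θ) = 1 := by
    rw [← Real.exp_add]; simp
  have hBB : Real.exp (θ + t) * Real.exp (-(θ + t)) = 1 := by
    rw [← Real.exp_add, show θ + t + -(θ + t) = 0 by ring, Real.exp_zero]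
  have hBA : Real.exp (θ + t) = Real.exp θ * Real.exp t := Real.exp_add θ t
  have hB'A : Real.exp (-(θ + t)) = Real.exp (-θ) * Real.exp (-t) := by
    rw [← Real.exp_add]; ring_nf
  have hT : 0 < Real.exp t := Real.exp_pos _
  have hT' : 0 < Real.exp (-t) := Real.exp_pos _
  have hTT : Real.exp t * Real.exp (-t) = 1 := by rw [← Real.exp_add]; simp
  have hE : 2 * t + 1 ≤ Real.exp t * Real.exp t := by
    have := Real.add_one_le_exp (2 * t)
    have h2 : Real.exp (2 * t) = Real.exp t * Real.exp t := by
      rw [← Real.exp_add]; ring_nf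
    linarith [h2 ▸ this]
  have h1 : Real.exp (θ + t) * Real.exp (θ + t) ≤ 1 :=
    mul_le_one₀ hsq hB.le hsq
  have key : t * (Real.exp θ * Real.exp θ * Real.exp t + Real.exp (-t)) ≤
      Real.exp t - Real.exp (-t) := by
    rw [hBA] at h1
    nlinarith [mul_nonneg ht hT.le, mul_pos hT hT', mul_nonneg ht (mul_pos (mul_pos hA hA) hT).le]
  have inner : t * Real.exp θ * (Real.exp (θ + t) + Real.exp (-(θ + t))) ≤
      Real.exp (θ + t) * Real.exp (-θ) - Real.exp (-(θ + t)) * Real.exp θ := by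
    rw [hBA, hB'A]
    have e1 : Real.exp θ * (Real.exp θ * Real.exp t + Real.exp (-θ) * Real.exp (-t)) =
        Real.exp θ * Real.exp θ * Real.exp t + Real.exp (-t) := by
      linear_combination Real.exp (-t) * hAA
    have e2 : Real.exp θ * Real.exp t * Real.exp (-θ) - Real.exp (-θ) * Real.exp (-t) * Real.exp θ =
        Real.exp t - Real.exp (-t) := by
      linear_combination (Real.exp t - Real.exp (-t)) * hAA
    calc t * Real.exp θ * (Real.exp θ * Real.exp t + Real.exp (-θ) * Real.exp (-t))
        = t * (Real.exp θ * Real.exp θ * Real.exp t + Real.exp (-t)) := by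
          rw [mul_assoc, e1]
      _ ≤ Real.exp t - Real.exp (-t) := key
      _ = _ := e2.symm
  unfold twoActionSoftmax
  rw [div_sub_div _ _ (by positivity) (by positivity), ← mul_div_assoc,
    div_le_div_iff₀ (by positivity) (by positivity)]
  nlinarith [mul_le_mul_of_nonneg_right inner
    (by positivity : (0:ℝ) ≤ Real.exp θ + Real.exp (-θ))]
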